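/- arXiv:2509.21835 — 2 statements merged into one kernel-verified Lean document; each statement's English description precedes it below -/
import Mathlib

section
/- Under Assumption [A2], for every t ≥ 0 and every y ∈ Y, the forward marginal satisfies q_t(y) ≤ e^{−t·(d − numK(y))}. -/
open Matrix Finset

/-- The mask token: token `K` in the vocabulary `{1,…,K}`, modeled as the last
element of `Fin K`. -/
def maskTok (K : ℕ) [NeZero K] : Fin K :=
  ⟨K - 1, Nat.sub_lt (Nat.pos_of_ne_zero (NeZero.ne K)) Nat.one_pos⟩

/-- The number of mask tokens in a sequence. -/
def numK (K d : ℕ) [NeZero K] (y : Fin d → Fin K) : ℕ :=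
  (Finset.univ.filter fun i => y i = maskTok K).card

/-- Hamming distance between two sequences. -/
def ham {K d : ℕ} (y y' : Fin d → Fin K) : ℕ :=
  (Finset.univ.filter fun i => y i ≠ y' i).card

/-- The masked (absorbing) forward transition-rate matrix: `R y y' = 1` if
`Ham(y,y') = 1` and the differing coordinate of `y` is the mask token,
`R y' y' = -(d - numK y')`, and `0` otherwise. -/
noncomputable def fwdRate (K d : ℕ) [NeZero K] :
    Matrix (Fin d → Fin K) (Fin d → Fin K) ℝ := fun y y' =>
  if y = y' then -((d : ℝ) - (numK K d y' : ℝ))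
  else if ham y y' = 1 ∧ ∀ i, y i ≠ y' i → y i = maskTok K then 1 else 0

/-- The forward marginal at time `t`: `q_t = exp(tR) · q₀`. -/
noncomputable def qt (K d : ℕ) [NeZero K] (q0 : (Fin d → Fin K) → ℝ) (t : ℝ) :
    (Fin d → Fin K) → ℝ :=
  NormedSpace.exp (t • fwdRate K d) *ᵥ q0

/-! ### Auxiliary development -/

attribute [local instance] Matrix.linftyOpNormedRing Matrix.linftyOpNormedAlgebra

section EntryCLM
variable {n : Type*} [Fintype n] [DecidableEq n]

/-- Entry evaluation as a continuous linear map. -/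
noncomputable def entryCLM (a b : n) : Matrix n n ℝ →L[ℝ] ℝ :=
  LinearMap.toContinuousLinearMap
    { toFun := fun M : Matrix n n ℝ => M a b
      map_add' := fun _ _ => rfl
      map_smul' := fun _ _ => rfl }

lemma hasDerivAt_entry {F : ℝ → Matrix n n ℝ} {F' : Matrix n n ℝ} {t : ℝ}
    (hF : HasDerivAt F F' t) (a b : n) :
    HasDerivAt (fun s => F s a b) (F' a b) t :=
  (entryCLM a b).hasFDerivAt.comp_hasDerivAt t hF

lemma hasDerivAt_exp_neg_smul (R : Matrix n n ℝ) (s : ℝ) :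
    HasDerivAt (fun u : ℝ => NormedSpace.exp ((-u) • R))
      (-(NormedSpace.exp ((-s) • R) * R)) s := by
  have h1 := hasDerivAt_exp_smul_const (𝕂 := ℝ) R (-s)
  have h2 : HasDerivAt (fun u : ℝ => -u) (-1) s := hasDerivAt_neg' s
  have h3 := h1.scomp s h2
  simp only [Function.comp_def, neg_smul, one_smul, neg_one_smul] at h3 ⊢
  exact h3

end EntryCLM

section Aux
variable (K d : ℕ) [NeZero K]

/-- Sum of `q0` over sequences agreeing with `y` on the non-mask coordinates of `y`. -/
noncomputable def Sfun (q0 : (Fin d → Fin K) → ℝ) (y : Fin d → Fin K) : ℝ :=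
  ∑ z ∈ Finset.univ.filter (fun z : Fin d → Fin K =>
      ∀ i, y i ≠ maskTok K → z i = y i), q0 z

/-- The explicit solution candidate. -/
noncomputable def vfun (q0 : (Fin d → Fin K) → ℝ) (t : ℝ) (y : Fin d → Fin K) : ℝ :=
  Real.exp (-((d : ℝ) - (numK K d y : ℝ)) * t) * (1 - Real.exp (-t)) ^ (numK K d y)
    * Sfun K d q0 y

/-- Its time derivative. -/
noncomputable def Dfun (q0 : (Fin d → Fin K) → ℝ) (t : ℝ) (y : Fin d → Fin K) : ℝ :=
  -((d : ℝ) - (numK K d y : ℝ)) * vfun K d q0 t y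
    + (numK K d y : ℝ) *
      (Real.exp (-((d : ℝ) - (numK K d y : ℝ)) * t) * Real.exp (-t)
        * (1 - Real.exp (-t)) ^ (numK K d y - 1) * Sfun K d q0 y)

variable {K d}

lemma numK_update {y : Fin d → Fin K} {i : Fin d} {a : Fin K}
    (hi : y i = maskTok K) (ha : a ≠ maskTok K) :
    numK K d (Function.update y i a) = numK K d y - 1 := by
  have h : (Finset.univ.filter fun j => Function.update y i a j = maskTok K)
      = (Finset.univ.filter fun j => y j = maskTok K).erase i := by
    ext j
    simp only [mem_filter, mem_univ, true_and, mem_erase]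
    rcases eq_or_ne j i with rfl | hj
    · simp [Function.update_self, ha]
    · simp [Function.update_of_ne hj, hj]
  rw [numK, h, Finset.card_erase_of_mem (by simp [hi])]
  rfl

lemma numK_pos {y : Fin d → Fin K} {i : Fin d} (hi : y i = maskTok K) :
    1 ≤ numK K d y :=
  Finset.card_pos.mpr ⟨i, by simp [hi]⟩

lemma q0_eq_zero {q0 : (Fin d → Fin K) → ℝ}
    (hq0nonneg : ∀ y, 0 ≤ q0 y) (hA2 : ∀ y, 0 < q0 y ↔ numK K d y = 0)
    {z : Fin d → Fin K} (hz : numK K d z ≠ 0) : q0 z = 0 := by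
  rcases (hq0nonneg z).lt_or_eq with h | h
  · exact absurd ((hA2 z).mp h) hz
  · exact h.symm

lemma Sfun_of_numK_eq_zero {q0 : (Fin d → Fin K) → ℝ} {y : Fin d → Fin K}
    (hy : numK K d y = 0) : Sfun K d q0 y = q0 y := by
  have hmask : ∀ i, y i ≠ maskTok K := by
    intro i hi
    exact absurd hy (Nat.one_le_iff_ne_zero.mp (numK_pos hi))
  have h : (Finset.univ.filter (fun z : Fin d → Fin K =>
      ∀ i, y i ≠ maskTok K → z i = y i)) = {y} := by
    ext z
    simp only [mem_filter, mem_univ, true_and, mem_singleton]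
    constructor
    · intro h; exact funext fun i => h i (hmask i)
    · rintro rfl; intro i _; rfl
  rw [Sfun, h, Finset.sum_singleton]

/-- Key additive property of `Sfun` over one mask coordinate. -/
lemma Sfun_update_sum {q0 : (Fin d → Fin K) → ℝ}
    (hq0nonneg : ∀ y, 0 ≤ q0 y) (hA2 : ∀ y, 0 < q0 y ↔ numK K d y = 0)
    {y : Fin d → Fin K} {i : Fin d} (hi : y i = maskTok K) :
    ∑ a ∈ Finset.univ.filter (fun a : Fin K => a ≠ maskTok K),
      Sfun K d q0 (Function.update y i a) = Sfun K d q0 y := by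
  classical
  set Q : (Fin d → Fin K) → Prop := fun z => ∀ j, y j ≠ maskTok K → z j = y j with hQ
  have hcompat : ∀ (a : Fin K), a ≠ maskTok K → ∀ (z : Fin d → Fin K),
      (∀ j, Function.update y i a j ≠ maskTok K → z j = Function.update y i a j)
        ↔ (z i = a ∧ Q z) := by
    intro a ha z
    constructor
    · intro h
      refine ⟨by simpa [Function.update_self] using h i (by simp [Function.update_self, ha]), ?_⟩
      intro j hj
      have hji : j ≠ i := fun hji => hj (hji ▸ hi)
      simpa [Function.update_of_ne hji] using h j (by simpa [Function.update_of_ne hji] using hj)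
    · rintro ⟨h1, h2⟩ j hj
      rcases eq_or_ne j i with rfl | hji
      · simpa [Function.update_self] using h1
      · rw [Function.update_of_ne hji] at hj ⊢
        exact h2 j hj
  have hSa : ∀ a ∈ Finset.univ.filter (fun a : Fin K => a ≠ maskTok K),
      Sfun K d q0 (Function.update y i a)
        = ∑ z ∈ (Finset.univ.filter (fun z : Fin d → Fin K => Q z ∧ z i ≠ maskTok K)).filter
            (fun z => z i = a), q0 z := by
    intro a ha
    rw [mem_filter] at ha
    rw [Sfun]
    apply Finset.sum_congr _ (fun _ _ => rfl)
    ext z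
    simp only [mem_filter, mem_univ, true_and]
    rw [hcompat a ha.2 z]
    constructor
    · rintro ⟨h1, h2⟩; exact ⟨⟨h2, h1 ▸ ha.2⟩, h1⟩
    · rintro ⟨⟨h2, _⟩, h1⟩; exact ⟨h1, h2⟩
  rw [Finset.sum_congr rfl hSa]
  rw [Finset.sum_fiberwise_of_maps_to (g := fun z => z i) ?hmaps q0]
  · rw [Sfun]
    apply Finset.sum_subset
    · intro z hz
      simp only [mem_filter, mem_univ, true_and] at hz ⊢
      exact hz.1
    · intro z hz hz'
      simp only [mem_filter, mem_univ, true_and, not_and, not_not] at hz hz'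
      exact q0_eq_zero hq0nonneg hA2 (Nat.one_le_iff_ne_zero.mp (numK_pos (hz' hz)))
  case hmaps =>
    intro z hz
    simp only [mem_filter, mem_univ, true_and] at hz ⊢
    exact hz.2

/-- Reindexing the inflow sum over (mask position, replacement token). -/
lemma sum_inflow (y : Fin d → Fin K) (f : (Fin d → Fin K) → ℝ) :
    ∑ y' ∈ Finset.univ.filter (fun y' => ham y y' = 1 ∧ ∀ i, y i ≠ y' i → y i = maskTok K), f y'
      = ∑ i ∈ Finset.univ.filter (fun i => y i = maskTok K),
          ∑ a ∈ Finset.univ.filter (fun a : Fin K => a ≠ maskTok K),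
            f (Function.update y i a) := by
  classical
  rw [Finset.sum_sigma']
  symm
  refine Finset.sum_bij (fun p _ => Function.update y p.1 p.2) ?hi ?inj ?surj ?h
  case hi =>
    rintro ⟨i, a⟩ hp
    simp only [Finset.mem_sigma, mem_filter, mem_univ, true_and] at hp
    obtain ⟨hi, ha⟩ := hp
    have hdiff : (Finset.univ.filter fun j => y j ≠ Function.update y i a j) = {i} := by
      ext j
      simp only [mem_filter, mem_univ, true_and, mem_singleton]
      rcases eq_or_ne j i with rfl | hj
      · simp [Function.update_self, hi, Ne.symm ha]
      · simp [Function.update_of_ne hj, hj]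
    simp only [mem_filter, mem_univ, true_and]
    constructor
    · rw [ham, hdiff, Finset.card_singleton]
    · intro j hj
      by_contra hejm
      have : j ∈ ({i} : Finset (Fin d)) := by rw [← hdiff]; simp [hj]
      rw [Finset.mem_singleton] at this
      exact hejm (this ▸ hi)
  case inj =>
    rintro ⟨i, a⟩ hp ⟨i', a'⟩ hp' heq
    replace heq : Function.update y i a = Function.update y i' a' := heq
    simp only [Finset.mem_sigma, mem_filter, mem_univ, true_and] at hp hp'
    have hii : i = i' := by
      by_contra hii
      have h1 := congrFun heq i
      rw [Function.update_self, Function.update_of_ne (Ne.symm (fun h => hii h.symm))] at h1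
      exact hp.2 (h1.trans hp.1)
    subst hii
    have h2 := congrFun heq i
    rw [Function.update_self, Function.update_self] at h2
    simp [h2]
  case surj =>
    intro y' hy'
    simp only [mem_filter, mem_univ, true_and] at hy'
    obtain ⟨hham, hmask⟩ := hy'
    obtain ⟨j, hj⟩ := Finset.card_eq_one.mp hham
    have hjmem : y j ≠ y' j := by
      have : j ∈ Finset.univ.filter fun i => y i ≠ y' i := hj ▸ Finset.mem_singleton_self j
      simpa using this
    have hjm : y j = maskTok K := hmask j hjmem
    refine ⟨⟨j, y' j⟩, ?_, ?_⟩
    · simp only [Finset.mem_sigma, mem_filter, mem_univ, true_and]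
      exact ⟨hjm, fun h => hjmem (hjm.trans h.symm)⟩
    · show Function.update y j (y' j) = y'
      funext k
      rcases eq_or_ne k j with rfl | hk
      · rw [Function.update_self]
      · rw [Function.update_of_ne hk]
        by_contra hne
        have : k ∈ ({j} : Finset (Fin d)) := by rw [← hj]; simp [hne]
        exact hk (Finset.mem_singleton.mp this)
  case h => rintro ⟨i, a⟩ _; rfl

/-- The candidate solves the forward equation (Kolmogorov). -/
lemma mulVec_vfun {q0 : (Fin d → Fin K) → ℝ}
    (hq0nonneg : ∀ y, 0 ≤ q0 y) (hA2 : ∀ y, 0 < q0 y ↔ numK K d y = 0)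
    (t : ℝ) (y : Fin d → Fin K) :
    (fwdRate K d *ᵥ vfun K d q0 t) y = Dfun K d q0 t y := by
  classical
  have hself : ¬ (ham y y = 1 ∧ ∀ i, y i ≠ y i → y i = maskTok K) := by
    intro ⟨h1, _⟩
    simp [ham] at h1
  have step1 : (fwdRate K d *ᵥ vfun K d q0 t) y
      = ∑ y', fwdRate K d y y' * vfun K d q0 t y' := by
    simp [Matrix.mulVec, dotProduct]
  rw [step1, ← Finset.add_sum_erase _ _ (Finset.mem_univ y)]
  have hdiag : fwdRate K d y y * vfun K d q0 t y
      = -((d : ℝ) - (numK K d y : ℝ)) * vfun K d q0 t y := by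
    simp [fwdRate]
  have hoff : ∀ y' ∈ Finset.univ.erase y,
      fwdRate K d y y' * vfun K d q0 t y'
        = if (ham y y' = 1 ∧ ∀ i, y i ≠ y' i → y i = maskTok K)
            then vfun K d q0 t y' else 0 := by
    intro y' hy'
    have hne : y ≠ y' := fun h => (Finset.mem_erase.mp hy').1 h.symm
    rw [fwdRate, if_neg hne]
    split_ifs <;> simp
  rw [Finset.sum_congr rfl hoff, Finset.sum_ite, Finset.sum_const_zero, add_zero]
  have hfilter : (Finset.univ.erase y).filter
        (fun y' => ham y y' = 1 ∧ ∀ i, y i ≠ y' i → y i = maskTok K)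
      = Finset.univ.filter
        (fun y' => ham y y' = 1 ∧ ∀ i, y i ≠ y' i → y i = maskTok K) := by
    ext y'
    simp only [Finset.mem_filter, Finset.mem_erase, Finset.mem_univ, true_and, and_true]
    constructor
    · exact fun h => h.2
    · exact fun h => ⟨fun heq => hself (heq ▸ h), h⟩
  rw [hfilter, sum_inflow, hdiag, Dfun]
  congr 1
  rcases Nat.eq_zero_or_pos (numK K d y) with hm | hm
  · have hempty : (Finset.univ.filter fun i => y i = maskTok K) = ∅ :=
      Finset.card_eq_zero.mp hm
    rw [hempty, Finset.sum_empty, hm]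
    simp
  · set m := numK K d y with hmdef
    have hcast : ((m - 1 : ℕ) : ℝ) = (m : ℝ) - 1 := by
      rw [Nat.cast_sub hm, Nat.cast_one]
    have hinner : ∀ i ∈ Finset.univ.filter (fun i => y i = maskTok K),
        ∑ a ∈ Finset.univ.filter (fun a : Fin K => a ≠ maskTok K),
          vfun K d q0 t (Function.update y i a)
        = Real.exp (-((d : ℝ) - ((m - 1 : ℕ) : ℝ)) * t) * (1 - Real.exp (-t)) ^ (m - 1)
            * Sfun K d q0 y := by
      intro i hi
      rw [Finset.mem_filter] at hi
      have : ∀ a ∈ Finset.univ.filter (fun a : Fin K => a ≠ maskTok K),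
          vfun K d q0 t (Function.update y i a)
          = Real.exp (-((d : ℝ) - ((m - 1 : ℕ) : ℝ)) * t) * (1 - Real.exp (-t)) ^ (m - 1)
              * Sfun K d q0 (Function.update y i a) := by
        intro a ha
        rw [Finset.mem_filter] at ha
        rw [vfun, numK_update hi.2 ha.2]
      rw [Finset.sum_congr rfl this, ← Finset.mul_sum, Sfun_update_sum hq0nonneg hA2 hi.2]
    rw [Finset.sum_congr rfl hinner, Finset.sum_const]
    have hcard : (Finset.univ.filter fun i => y i = maskTok K).card = m := rfl
    rw [hcard, nsmul_eq_mul]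
    have hexp : Real.exp (-((d : ℝ) - ((m - 1 : ℕ) : ℝ)) * t)
        = Real.exp (-((d : ℝ) - (m : ℝ)) * t) * Real.exp (-t) := by
      rw [← Real.exp_add]
      congr 1
      rw [hcast]; ring
    rw [hexp]

/-- `vfun` has derivative `Dfun`. -/
lemma hasDerivAt_vfun (q0 : (Fin d → Fin K) → ℝ) (y : Fin d → Fin K) (s : ℝ) :
    HasDerivAt (fun t => vfun K d q0 t y) (Dfun K d q0 s y) s := by
  set c := (d : ℝ) - (numK K d y : ℝ) with hc
  set m := numK K d y with hm
  have h1 : HasDerivAt (fun t : ℝ => Real.exp (-c * t)) (Real.exp (-c * s) * -c) s := by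
    have hlin : HasDerivAt (fun t : ℝ => -c * t) (-c) s := by
      simpa using (hasDerivAt_id s).const_mul (-c)
    exact hlin.exp
  have hin : HasDerivAt (fun t : ℝ => 1 - Real.exp (-t)) (Real.exp (-s)) s := by
    have h := ((hasDerivAt_neg' s).exp).const_sub 1
    simpa using h
  have h2 := hin.pow m
  have h3 := (h1.mul h2).mul_const (Sfun K d q0 y)
  refine HasDerivAt.congr_deriv (h3.congr_of_eventuallyEq
    (Filter.Eventually.of_forall fun u => ?_)) ?_
  · simp only [vfun, Pi.mul_apply, Pi.pow_apply]
    rfl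
  simp only [Dfun, vfun, Pi.pow_apply, ← hc, ← hm]
  ring

/-- `vfun` at time `0` equals `q0` under [A2]. -/
lemma vfun_zero {q0 : (Fin d → Fin K) → ℝ}
    (hq0nonneg : ∀ y, 0 ≤ q0 y) (hA2 : ∀ y, 0 < q0 y ↔ numK K d y = 0) :
    vfun K d q0 0 = q0 := by
  funext y
  rcases Nat.eq_zero_or_pos (numK K d y) with hm | hm
  · rw [vfun, hm, Sfun_of_numK_eq_zero hm]
    simp
  · rw [vfun, q0_eq_zero hq0nonneg hA2 (Nat.one_le_iff_ne_zero.mp hm)]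
    simp [Real.exp_zero, zero_pow (Nat.one_le_iff_ne_zero.mp hm)]

/-- The exact solution formula: `qt = vfun`. -/
lemma qt_eq_vfun {q0 : (Fin d → Fin K) → ℝ}
    (hq0nonneg : ∀ y, 0 ≤ q0 y) (hA2 : ∀ y, 0 < q0 y ↔ numK K d y = 0)
    (t : ℝ) : qt K d q0 t = vfun K d q0 t := by
  classical
  set R := fwdRate K d with hR
  -- the function u ↦ exp(-u R) v(u) has zero derivative in each coordinate
  have hg : ∀ (y : Fin d → Fin K) (s : ℝ),
      HasDerivAt (fun u => (NormedSpace.exp ((-u) • R) *ᵥ vfun K d q0 u) y) 0 s := by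
    intro y s
    set E := NormedSpace.exp ((-s) • R) with hE
    have hterm : ∀ y' : Fin d → Fin K,
        HasDerivAt (fun u => NormedSpace.exp ((-u) • R) y y' * vfun K d q0 u y')
          ((-(E * R)) y y' * vfun K d q0 s y' + E y y' * Dfun K d q0 s y') s :=
      fun y' => (hasDerivAt_entry (hasDerivAt_exp_neg_smul R s) y y').mul
        (hasDerivAt_vfun q0 y' s)
    have hsum := HasDerivAt.sum (fun y' (_ : y' ∈ Finset.univ) => hterm y')
    have hzero : ∑ y' : Fin d → Fin K,
        ((-(E * R)) y y' * vfun K d q0 s y' + E y y' * Dfun K d q0 s y') = 0 := by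
      rw [Finset.sum_add_distrib]
      have hRv : ∀ z : Fin d → Fin K,
          ∑ y' : Fin d → Fin K, R z y' * vfun K d q0 s y' = Dfun K d q0 s z := by
        intro z; rw [← mulVec_vfun hq0nonneg hA2 s z]; rfl
      have hA : ∑ y' : Fin d → Fin K, (-(E * R)) y y' * vfun K d q0 s y'
          = ∑ z : Fin d → Fin K, -(E y z * Dfun K d q0 s z) := by
        have h1 : ∀ y' : Fin d → Fin K, (-(E * R)) y y' * vfun K d q0 s y'
            = ∑ z : Fin d → Fin K, -(E y z * (R z y' * vfun K d q0 s y')) := by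
          intro y'
          rw [Finset.sum_neg_distrib, Matrix.neg_apply, Matrix.mul_apply, neg_mul,
            Finset.sum_mul]
          congr 1
          exact Finset.sum_congr rfl fun z _ => mul_assoc _ _ _
        rw [Finset.sum_congr rfl fun y' _ => h1 y', Finset.sum_comm]
        refine Finset.sum_congr rfl fun z _ => ?_
        rw [Finset.sum_neg_distrib, ← Finset.mul_sum, hRv z]
      rw [hA, Finset.sum_neg_distrib]
      exact neg_add_cancel _
    have := hzero ▸ hsum
    refine this.congr_of_eventuallyEq (Filter.Eventually.of_forall fun u => ?_)
    simp [Matrix.mulVec, dotProduct, Finset.sum_apply]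
  -- hence it is constant
  have hconst : ∀ y : Fin d → Fin K,
      (NormedSpace.exp ((-t) • R) *ᵥ vfun K d q0 t) y
        = (NormedSpace.exp ((-(0:ℝ)) • R) *ᵥ vfun K d q0 0) y := by
    intro y
    exact is_const_of_deriv_eq_zero (fun s => (hg y s).differentiableAt)
      (fun s => (hg y s).deriv) t 0
  have hq0 : NormedSpace.exp ((-t) • R) *ᵥ vfun K d q0 t = q0 := by
    funext y
    rw [hconst y, vfun_zero hq0nonneg hA2]
    simp [NormedSpace.exp_zero, Matrix.one_mulVec]
  have hcomm : Commute (t • R) ((-t) • R) := ((Commute.refl R).smul_left t).smul_right (-t)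
  have hmul : NormedSpace.exp (t • R) * NormedSpace.exp ((-t) • R) = 1 := by
    rw [← Matrix.exp_add_of_commute _ _ hcomm, ← add_smul, add_neg_cancel, zero_smul,
      NormedSpace.exp_zero]
  rw [qt]
  conv_lhs => rw [← hq0]
  rw [Matrix.mulVec_mulVec, hmul, Matrix.one_mulVec]

end Aux

/-- Under Assumption [A2], the forward marginal is bounded by
`q_t(y) ≤ e^{-t(d - numK y)}`. -/
theorem qt_le_exp (K d : ℕ) [NeZero K] (hK : 2 ≤ K) (hd : 1 ≤ d)
    (q0 : (Fin d → Fin K) → ℝ)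
    (hq0nonneg : ∀ y, 0 ≤ q0 y) (hq0sum : ∑ y, q0 y = 1)
    (hA2 : ∀ y, 0 < q0 y ↔ numK K d y = 0)
    (t : ℝ) (ht : 0 ≤ t) (y : Fin d → Fin K) :
    qt K d q0 t y ≤ Real.exp (-t * ((d : ℝ) - (numK K d y : ℝ))) := by
  rw [qt_eq_vfun hq0nonneg hA2 t, vfun]
  have hS0 : 0 ≤ Sfun K d q0 y := Finset.sum_nonneg fun z _ => hq0nonneg z
  have hS1 : Sfun K d q0 y ≤ 1 := by
    rw [← hq0sum]
    exact Finset.sum_le_sum_of_subset_of_nonneg (Finset.filter_subset _ _)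
      (fun z _ _ => hq0nonneg z)
  have hexp1 : Real.exp (-t) ≤ 1 := by
    calc Real.exp (-t) ≤ Real.exp 0 := Real.exp_le_exp.mpr (neg_nonpos.mpr ht)
    _ = 1 := Real.exp_zero
  have hp0 : 0 ≤ 1 - Real.exp (-t) := by linarith
  have hp1 : 1 - Real.exp (-t) ≤ 1 := by
    have := Real.exp_pos (-t)
    linarith
  have hpow0 : 0 ≤ (1 - Real.exp (-t)) ^ (numK K d y) := pow_nonneg hp0 _
  have hpow1 : (1 - Real.exp (-t)) ^ (numK K d y) ≤ 1 := pow_le_one₀ hp0 hp1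
  have hE : Real.exp (-((d : ℝ) - (numK K d y : ℝ)) * t)
      = Real.exp (-t * ((d : ℝ) - (numK K d y : ℝ))) := by
    congr 1; ring
  rw [hE]
  have hEpos : (0:ℝ) < Real.exp (-t * ((d : ℝ) - (numK K d y : ℝ))) := Real.exp_pos _
  calc Real.exp (-t * ((d : ℝ) - (numK K d y : ℝ))) * (1 - Real.exp (-t)) ^ (numK K d y)
        * Sfun K d q0 y
      ≤ Real.exp (-t * ((d : ℝ) - (numK K d y : ℝ))) * 1 * 1 := by
        refine mul_le_mul (mul_le_mul le_rfl hpow1 hpow0 hEpos.le) hS1 hS0 ?_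
        positivity
    _ = Real.exp (-t * ((d : ℝ) - (numK K d y : ℝ))) := by ring
end

section
/- Under Assumption [A2], fix T > 0 and t ∈ [0,T). For every y ∈ Y, the total outgoing rate of the ideal reverse process at reverse time t satisfies ∑_{y'≠y} R(y,y') · q_{T−t}(y') / q_{T−t}(y) ≤ numK(y) · K / (e^{T−t} − 1); equivalently, ∑_{i : y_i = K} ∑_{k=1}^{K−1} q_{T−t}(y[i→k]) / q_{T−t}(y) ≤ numK(y) · K / (e^{T−t} − 1). -/
open Matrix Finset

noncomputable def pEnt (K : ℕ) [NeZero K] (s : ℝ) (a b : Fin K) : ℝ :=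
  if b = maskTok K then (if a = maskTok K then 1 else 0)
  else if a = b then Real.exp (-s) else if a = maskTok K then 1 - Real.exp (-s) else 0

noncomputable def pDer (K : ℕ) [NeZero K] (s : ℝ) (a b : Fin K) : ℝ :=
  if b = maskTok K then 0
  else if a = b then -Real.exp (-s) else if a = maskTok K then Real.exp (-s) else 0

noncomputable def Mmat (K d : ℕ) [NeZero K] (s : ℝ) :
    Matrix (Fin d → Fin K) (Fin d → Fin K) ℝ :=
  fun y x => ∏ i, pEnt K s (y i) (x i)

variable {K d : ℕ} [NeZero K]

lemma hasDerivAt_pEnt (s : ℝ) (a b : Fin K) :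
    HasDerivAt (fun u => pEnt K u a b) (pDer K s a b) s := by
  have he : HasDerivAt (fun u : ℝ => Real.exp (-u)) (-Real.exp (-s)) s := by
    simpa [Function.comp_def] using (Real.hasDerivAt_exp (-s)).comp s (hasDerivAt_neg s)
  unfold pEnt pDer
  split_ifs <;> first
    | exact hasDerivAt_const _ _
    | exact he
    | simpa [Pi.sub_def] using (hasDerivAt_const s (1:ℝ)).sub he

lemma pEnt_nonneg {s : ℝ} (hs : 0 ≤ s) (a b : Fin K) : 0 ≤ pEnt K s a b := by
  have h1 : Real.exp (-s) ≤ 1 := Real.exp_le_one_iff.mpr (by linarith)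
  have h2 : (0:ℝ) < Real.exp (-s) := Real.exp_pos _
  unfold pEnt
  split_ifs <;> linarith

lemma sum_pEnt_ne_mask (s : ℝ) (b : Fin K) :
    ∑ k ∈ univ.filter (fun k : Fin K => k ≠ maskTok K), pEnt K s k b
      = if b = maskTok K then 0 else Real.exp (-s) := by
  rcases eq_or_ne b (maskTok K) with hb | hb
  · subst hb
    rw [if_pos rfl]
    exact Finset.sum_eq_zero fun k hk => by
      simp [pEnt, (Finset.mem_filter.mp hk).2]
  · rw [if_neg hb]
    have h : ∀ k ∈ univ.filter (fun k : Fin K => k ≠ maskTok K),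
        pEnt K s k b = if k = b then Real.exp (-s) else 0 := by
      intro k hk
      have hk' := (Finset.mem_filter.mp hk).2
      simp only [pEnt, if_neg hb, if_neg hk']
    rw [Finset.sum_congr rfl h, Finset.sum_ite_eq' _ b (fun _ => Real.exp (-s))]
    simp [hb]

lemma pDer_mask (s : ℝ) (b : Fin K) :
    pDer K s (maskTok K) b = if b = maskTok K then 0 else Real.exp (-s) := by
  rcases eq_or_ne b (maskTok K) with hb | hb
  · simp [pDer, hb]
  · simp [pDer, hb, (Ne.symm hb)]

lemma pDer_eq_neg_pEnt (s : ℝ) {a : Fin K} (b : Fin K) (ha : a ≠ maskTok K) :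
    pDer K s a b = -pEnt K s a b := by
  unfold pDer pEnt
  split_ifs <;> simp_all

lemma update_mem_aux {y : Fin d → Fin K} {i : Fin d} {k : Fin K}
    (hi : y i = maskTok K) (hk : k ≠ maskTok K) :
    Function.update y i k ≠ y ∧ ham y (Function.update y i k) = 1 ∧
      ∀ j, y j ≠ Function.update y i k j → y j = maskTok K := by
  have hne : y i ≠ k := by rw [hi]; exact Ne.symm hk
  have hfil : (univ.filter fun j => y j ≠ Function.update y i k j) = {i} := by
    ext j
    simp only [Finset.mem_filter, Finset.mem_univ, true_and, Finset.mem_singleton]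
    constructor
    · intro hj
      by_contra hji
      exact hj (by rw [Function.update_of_ne hji])
    · intro hj; subst hj
      rw [Function.update_self]; exact hne
  refine ⟨?_, ?_, ?_⟩
  · intro h
    have := congrFun h i
    rw [Function.update_self] at this
    exact hk (this.trans hi)
  · rw [ham, hfil]; rfl
  · intro j hj
    have : j ∈ ({i} : Finset (Fin d)) := by
      rw [← hfil]; simp [hj]
    rw [Finset.mem_singleton] at this; subst this; exact hi

lemma sum_offdiag (y : Fin d → Fin K) (g : (Fin d → Fin K) → ℝ) :
    ∑ y' ∈ univ.erase y, fwdRate K d y y' * g y'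
      = ∑ i ∈ univ.filter (fun i : Fin d => y i = maskTok K),
          ∑ k ∈ univ.filter (fun k : Fin K => k ≠ maskTok K),
            g (Function.update y i k) := by
  classical
  set S : Finset (Fin d × Fin K) :=
    (univ.filter fun i : Fin d => y i = maskTok K) ×ˢ
      (univ.filter fun k : Fin K => k ≠ maskTok K) with hS
  have hRHS : ∑ i ∈ univ.filter (fun i : Fin d => y i = maskTok K),
          ∑ k ∈ univ.filter (fun k : Fin K => k ≠ maskTok K),
            g (Function.update y i k)
      = ∑ p ∈ S, g (Function.update y p.1 p.2) := by rw [hS, Finset.sum_product]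
  have h1 : ∀ y' ∈ univ.erase y, fwdRate K d y y' * g y'
      = if (ham y y' = 1 ∧ ∀ i, y i ≠ y' i → y i = maskTok K) then g y' else 0 := by
    intro y' hy'
    have hne : y ≠ y' := (Finset.ne_of_mem_erase hy').symm
    rw [fwdRate, if_neg hne]
    split_ifs <;> ring
  rw [Finset.sum_congr rfl h1, ← Finset.sum_filter, hRHS]
  have himg : (univ.erase y).filter
      (fun y' => ham y y' = 1 ∧ ∀ i, y i ≠ y' i → y i = maskTok K)
      = S.image (fun p => Function.update y p.1 p.2) := by
    ext y'
    simp only [Finset.mem_filter, Finset.mem_erase, Finset.mem_univ, true_and,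
      Finset.mem_image, hS, Finset.mem_product, and_true]
    constructor
    · rintro ⟨hne, hham, hmask⟩
      obtain ⟨i, hi⟩ := Finset.card_eq_one.mp hham
      have hiMem : i ∈ univ.filter fun j => y j ≠ y' j := by rw [hi]; exact Finset.mem_singleton_self i
      have hidiff : y i ≠ y' i := (Finset.mem_filter.mp hiMem).2
      have hyi : y i = maskTok K := hmask i hidiff
      refine ⟨(i, y' i), ⟨?_, ?_⟩, ?_⟩
      · simpa using hyi
      · simpa using fun h => hidiff (hyi.trans h.symm) |>.elim
      · funext j
        rcases eq_or_ne j i with rfl | hj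
        · rw [Function.update_self]
        · rw [Function.update_of_ne hj]
          by_contra hne'
          have : j ∈ ({i} : Finset (Fin d)) := by
            rw [← hi]; simp [hne']
          exact hj (Finset.mem_singleton.mp this)
    · rintro ⟨⟨i, k⟩, ⟨hi, hk⟩, rfl⟩
      simp only [Finset.mem_filter, Finset.mem_univ, true_and] at hi hk
      obtain ⟨h1, h2, h3⟩ := update_mem_aux hi hk
      exact ⟨h1, h2, h3⟩
  rw [himg, Finset.sum_image]
  rintro ⟨i, k⟩ hik ⟨i', k'⟩ hik' heq
  simp only [Finset.mem_coe, hS, Finset.mem_product, Finset.mem_filter, Finset.mem_univ, true_and] at hik hik'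
  rcases eq_or_ne i i' with rfl | hii
  · have h := congrFun heq i
    simp only [Function.update_self] at h
    simp [h]
  · exfalso
    have h := congrFun heq i
    simp only [Function.update_self, Function.update_of_ne hii] at h
    exact hik.2 (h.trans hik.1)

lemma Mmat_update (s : ℝ) (y x : Fin d → Fin K) (i : Fin d) (k : Fin K) :
    Mmat K d s (Function.update y i k) x
      = pEnt K s k (x i) * ∏ j ∈ univ.erase i, pEnt K s (y j) (x j) := by
  rw [Mmat, ← Finset.mul_prod_erase univ _ (Finset.mem_univ i), Function.update_self]
  congr 1
  exact Finset.prod_congr rfl fun j hj => by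
    rw [Function.update_of_ne (Finset.ne_of_mem_erase hj)]

lemma numK_card_compl (y : Fin d → Fin K) :
    (univ.filter fun i => ¬ y i = maskTok K).card = d - numK K d y := by
  have h := Finset.card_filter_add_card_filter_not
    (s := (univ : Finset (Fin d))) (p := fun i => y i = maskTok K)
  simp only [Finset.card_univ, Fintype.card_fin] at h
  rw [numK]
  omega

lemma numK_le (y : Fin d → Fin K) : numK K d y ≤ d := by
  have := Finset.card_filter_le (univ : Finset (Fin d)) (fun i => y i = maskTok K)
  simpa [numK] using this

lemma mul_Mmat_apply (s : ℝ) (y x : Fin d → Fin K) :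
    (fwdRate K d * Mmat K d s) y x
      = ∑ i, pDer K s (y i) (x i) * ∏ j ∈ univ.erase i, pEnt K s (y j) (x j) := by
  classical
  rw [Matrix.mul_apply, ← Finset.add_sum_erase _ _ (Finset.mem_univ y),
    sum_offdiag y (fun y' => Mmat K d s y' x)]
  rw [← Finset.sum_filter_add_sum_filter_not univ (fun i => y i = maskTok K)
    (fun i => pDer K s (y i) (x i) * ∏ j ∈ univ.erase i, pEnt K s (y j) (x j))]
  have hdiag : fwdRate K d y y * Mmat K d s y x
      = ∑ i ∈ univ.filter (fun i => ¬ y i = maskTok K),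
          pDer K s (y i) (x i) * ∏ j ∈ univ.erase i, pEnt K s (y j) (x j) := by
    have hterm : ∀ i ∈ univ.filter (fun i => ¬ y i = maskTok K),
        pDer K s (y i) (x i) * ∏ j ∈ univ.erase i, pEnt K s (y j) (x j)
          = -Mmat K d s y x := by
      intro i hi
      have hi' := (Finset.mem_filter.mp hi).2
      rw [pDer_eq_neg_pEnt s (x i) hi', neg_mul]
      simp only [Mmat]
      rw [← Finset.mul_prod_erase univ (fun j => pEnt K s (y j) (x j)) (Finset.mem_univ i)]
    rw [Finset.sum_congr rfl hterm, Finset.sum_const, numK_card_compl,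
      nsmul_eq_mul, fwdRate, if_pos rfl]
    have hle : numK K d y ≤ d := numK_le y
    have : ((d - numK K d y : ℕ) : ℝ) = (d : ℝ) - numK K d y := by
      push_cast [Nat.cast_sub hle]; ring
    rw [this]; ring
  have hmask : ∀ i ∈ univ.filter (fun i => y i = maskTok K),
      ∑ k ∈ univ.filter (fun k : Fin K => k ≠ maskTok K),
          Mmat K d s (Function.update y i k) x
        = pDer K s (y i) (x i) * ∏ j ∈ univ.erase i, pEnt K s (y j) (x j) := by
    intro i hi
    have hi' := (Finset.mem_filter.mp hi).2
    have : ∀ k ∈ univ.filter (fun k : Fin K => k ≠ maskTok K),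
        Mmat K d s (Function.update y i k) x
          = pEnt K s k (x i) * ∏ j ∈ univ.erase i, pEnt K s (y j) (x j) :=
      fun k _ => Mmat_update s y x i k
    rw [Finset.sum_congr rfl this, ← Finset.sum_mul, sum_pEnt_ne_mask, hi', pDer_mask]
  rw [hdiag, Finset.sum_congr rfl hmask]
  ring

lemma hasDerivAt_Mmat (s : ℝ) (y x : Fin d → Fin K) :
    HasDerivAt (fun u => Mmat K d u y x) ((fwdRate K d * Mmat K d s) y x) s := by
  have h := HasDerivAt.fun_finsetProd (u := (univ : Finset (Fin d)))
    (f := fun i u => pEnt K u (y i) (x i)) (f' := fun i => pDer K s (y i) (x i))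
    (fun i _ => hasDerivAt_pEnt s (y i) (x i))
  rw [mul_Mmat_apply]
  simp only [Mmat]
  refine h.congr_deriv ?_
  simp [smul_eq_mul, mul_comm]

lemma hasDerivAt_exp_entry (s : ℝ) (y x : Fin d → Fin K) :
    HasDerivAt (fun u : ℝ => NormedSpace.exp (u • fwdRate K d) y x)
      ((NormedSpace.exp (s • fwdRate K d) * fwdRate K d) y x) s := by
  letI : SeminormedRing (Matrix (Fin d → Fin K) (Fin d → Fin K) ℝ) :=
    Matrix.linftyOpSemiNormedRing
  letI : NormedRing (Matrix (Fin d → Fin K) (Fin d → Fin K) ℝ) :=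
    Matrix.linftyOpNormedRing
  letI : NormedAlgebra ℝ (Matrix (Fin d → Fin K) (Fin d → Fin K) ℝ) :=
    Matrix.linftyOpNormedAlgebra
  have h := hasDerivAt_exp_smul_const (𝕂 := ℝ) (fwdRate K d) s
  let L0 : Matrix (Fin d → Fin K) (Fin d → Fin K) ℝ →ₗ[ℝ] ℝ :=
    { toFun := fun A => A y x
      map_add' := fun A B => rfl
      map_smul' := fun c A => rfl }
  let L : Matrix (Fin d → Fin K) (Fin d → Fin K) ℝ →L[ℝ] ℝ :=
    LinearMap.toContinuousLinearMap L0
  exact L.hasFDerivAt.comp_hasDerivAt s h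

lemma Mmat_zero : Mmat K d 0 = (1 : Matrix (Fin d → Fin K) (Fin d → Fin K) ℝ) := by
  ext y x
  rcases eq_or_ne y x with rfl | hyx
  · rw [Matrix.one_apply_eq, Mmat]
    exact Finset.prod_eq_one fun i _ => by simp [pEnt]
  · rw [Matrix.one_apply_ne hyx, Mmat]
    obtain ⟨i, hi⟩ : ∃ i, y i ≠ x i := by
      by_contra h
      push_neg at h
      exact hyx (funext h)
    refine Finset.prod_eq_zero (Finset.mem_univ i) ?_
    simp only [pEnt]
    split_ifs with h1 h2 h3 h3 h4 <;> first | rfl | simp_all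

lemma exp_smul_eq_Mmat (s : ℝ) :
    NormedSpace.exp (s • fwdRate K d) = Mmat K d s := by
  classical
  have key : ∀ y x : Fin d → Fin K, ∀ u : ℝ,
      HasDerivAt (fun u : ℝ => ∑ z, NormedSpace.exp ((-u) • fwdRate K d) y z
          * Mmat K d u z x) 0 u := by
    intro y x u
    have h1 : ∀ z, HasDerivAt (fun u : ℝ => NormedSpace.exp ((-u) • fwdRate K d) y z)
        (-((NormedSpace.exp ((-u) • fwdRate K d) * fwdRate K d) y z)) u := by
      intro z
      have := (hasDerivAt_exp_entry (-u) y z).comp u (hasDerivAt_neg u)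
      simpa [Function.comp_def] using this
    have h2 : ∀ z, HasDerivAt (fun u => Mmat K d u z x)
        ((fwdRate K d * Mmat K d u) z x) u := fun z => hasDerivAt_Mmat u z x
    have h3 := HasDerivAt.fun_sum (u := (univ : Finset (Fin d → Fin K)))
      (fun z _ => ((h1 z).fun_mul (h2 z)))
    refine h3.congr_deriv ?_
    have e1 : ∑ z, (-((NormedSpace.exp ((-u) • fwdRate K d) * fwdRate K d) y z)
          * Mmat K d u z x
        + NormedSpace.exp ((-u) • fwdRate K d) y z * (fwdRate K d * Mmat K d u) z x)
        = -(((NormedSpace.exp ((-u) • fwdRate K d) * fwdRate K d) * Mmat K d u) y x)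
          + (NormedSpace.exp ((-u) • fwdRate K d) * (fwdRate K d * Mmat K d u)) y x := by
      rw [Finset.sum_add_distrib, Matrix.mul_apply (M := NormedSpace.exp ((-u) • fwdRate K d) * fwdRate K d),
        Matrix.mul_apply (M := NormedSpace.exp ((-u) • fwdRate K d))]
      rw [← Finset.sum_neg_distrib]
      simp [neg_mul]
    rw [e1, Matrix.mul_assoc]
    ring
  have const : ∀ y x : Fin d → Fin K, ∀ u : ℝ,
      (∑ z, NormedSpace.exp ((-u) • fwdRate K d) y z * Mmat K d u z x)
        = ∑ z, NormedSpace.exp ((-(0:ℝ)) • fwdRate K d) y z * Mmat K d 0 z x := by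
    intro y x u
    exact is_const_of_deriv_eq_zero
      (fun v => ((key y x v).differentiableAt))
      (fun v => (key y x v).deriv) u 0
  have hone : ∀ u : ℝ, NormedSpace.exp ((-u) • fwdRate K d) * Mmat K d u = 1 := by
    intro u
    ext y x
    have h := const y x u
    rw [Matrix.mul_apply]
    rw [h]
    simp only [neg_zero, zero_smul, NormedSpace.exp_zero, Mmat_zero, Matrix.one_apply]
    simp [Finset.sum_ite_eq, Matrix.one_apply]
  have hcomm : Commute (s • fwdRate K d) ((-s) • fwdRate K d) :=
    ((Commute.refl (fwdRate K d)).smul_left s).smul_right (-s)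
  have hmul : NormedSpace.exp (s • fwdRate K d) * NormedSpace.exp ((-s) • fwdRate K d)
      = 1 := by
    rw [← Matrix.exp_add_of_commute _ _ hcomm]
    have : s • fwdRate K d + (-s) • fwdRate K d = 0 := by
      rw [← add_smul]; simp
    rw [this, NormedSpace.exp_zero]
  calc NormedSpace.exp (s • fwdRate K d)
      = NormedSpace.exp (s • fwdRate K d)
        * (NormedSpace.exp ((-s) • fwdRate K d) * Mmat K d s) := by rw [hone s, mul_one]
    _ = (NormedSpace.exp (s • fwdRate K d) * NormedSpace.exp ((-s) • fwdRate K d))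
        * Mmat K d s := by rw [mul_assoc]
    _ = Mmat K d s := by rw [hmul, one_mul]

lemma qt_eq (q0 : (Fin d → Fin K) → ℝ) (s : ℝ) (y : Fin d → Fin K) :
    qt K d q0 s y = ∑ x, (∏ i, pEnt K s (y i) (x i)) * q0 x := by
  rw [qt, exp_smul_eq_Mmat]
  simp [Matrix.mulVec, dotProduct, Mmat]

lemma numK_eq_zero_iff (x : Fin d → Fin K) :
    numK K d x = 0 ↔ ∀ i, x i ≠ maskTok K := by
  rw [numK, Finset.card_eq_zero, Finset.filter_eq_empty_iff]
  simp

lemma qt_pos (q0 : (Fin d → Fin K) → ℝ)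
    (hq0nonneg : ∀ y, 0 ≤ q0 y) (hq0sum : ∑ y, q0 y = 1)
    (hA2 : ∀ y, 0 < q0 y ↔ numK K d y = 0)
    {s : ℝ} (hs : 0 < s) (y : Fin d → Fin K) : 0 < qt K d q0 s y := by
  classical
  rw [qt_eq]
  obtain ⟨x0, hx0⟩ : ∃ x0, 0 < q0 x0 := by
    by_contra h
    push_neg at h
    have : (∑ x, q0 x) ≤ 0 := Finset.sum_nonpos fun x _ => h x
    linarith
  have hx0' : ∀ i, x0 i ≠ maskTok K := (numK_eq_zero_iff x0).mp ((hA2 x0).mp hx0)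
  set xs : Fin d → Fin K := fun i => if y i = maskTok K then x0 i else y i with hxs
  have hxsne : ∀ i, xs i ≠ maskTok K := by
    intro i
    show (if y i = maskTok K then x0 i else y i) ≠ maskTok K
    split_ifs with h
    · exact hx0' i
    · exact h
  have hq0xs : 0 < q0 xs := (hA2 xs).mpr ((numK_eq_zero_iff xs).mpr hxsne)
  have hterm : 0 < (∏ i, pEnt K s (y i) (xs i)) * q0 xs := by
    refine mul_pos (Finset.prod_pos fun i _ => ?_) hq0xs
    have h1 : Real.exp (-s) < 1 := Real.exp_lt_one_iff.mpr (by linarith)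
    have h2 : (0:ℝ) < Real.exp (-s) := Real.exp_pos _
    rcases eq_or_ne (y i) (maskTok K) with hy | hy
    · have : xs i ≠ maskTok K := hxsne i
      rw [pEnt, if_neg this, if_neg (by rw [hy]; exact Ne.symm this), if_pos hy]
      linarith
    · have hxsi : xs i = y i := if_neg hy
      rw [pEnt, hxsi, if_neg hy, if_pos rfl]
      exact h2
  refine lt_of_lt_of_le hterm (Finset.single_le_sum (f := fun x => (∏ i, pEnt K s (y i) (x i)) * q0 x) ?_ (Finset.mem_univ xs))
  intro x _
  exact mul_nonneg (Finset.prod_nonneg fun i _ => pEnt_nonneg hs.le _ _) (hq0nonneg x)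

lemma sum_qt_update (q0 : (Fin d → Fin K) → ℝ)
    (hq0nonneg : ∀ y, 0 ≤ q0 y)
    (hA2 : ∀ y, 0 < q0 y ↔ numK K d y = 0)
    {s : ℝ} (hs : 0 < s) (y : Fin d → Fin K) (i : Fin d) (hi : y i = maskTok K) :
    ∑ k ∈ univ.filter (fun k : Fin K => k ≠ maskTok K), qt K d q0 s (Function.update y i k)
      = (Real.exp s - 1)⁻¹ * qt K d q0 s y := by
  classical
  have hes : (1:ℝ) < Real.exp s := by
    rw [← Real.exp_zero]
    exact Real.exp_strictMono hs
  have hes0 : Real.exp s - 1 ≠ 0 := by linarith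
  simp only [qt_eq]
  rw [Finset.sum_comm, Finset.mul_sum]
  refine Finset.sum_congr rfl fun x _ => ?_
  rcases eq_or_ne (q0 x) 0 with hq | hq
  · simp [hq]
  have hx : 0 < q0 x := lt_of_le_of_ne (hq0nonneg x) (Ne.symm hq)
  have hxne : ∀ j, x j ≠ maskTok K := (numK_eq_zero_iff x).mp ((hA2 x).mp hx)
  have hupd : ∀ k, (∏ j, pEnt K s (Function.update y i k j) (x j))
      = pEnt K s k (x i) * ∏ j ∈ univ.erase i, pEnt K s (y j) (x j) := by
    intro k
    rw [← Finset.mul_prod_erase univ _ (Finset.mem_univ i), Function.update_self]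
    congr 1
    exact Finset.prod_congr rfl fun j hj => by
      rw [Function.update_of_ne (Finset.ne_of_mem_erase hj)]
  calc ∑ k ∈ univ.filter (fun k : Fin K => k ≠ maskTok K),
        (∏ j, pEnt K s (Function.update y i k j) (x j)) * q0 x
      = (∑ k ∈ univ.filter (fun k : Fin K => k ≠ maskTok K), pEnt K s k (x i))
          * ((∏ j ∈ univ.erase i, pEnt K s (y j) (x j)) * q0 x) := by
        rw [Finset.sum_mul]
        exact Finset.sum_congr rfl fun k _ => by rw [hupd k]; ring
    _ = Real.exp (-s) * ((∏ j ∈ univ.erase i, pEnt K s (y j) (x j)) * q0 x) := by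
        rw [sum_pEnt_ne_mask, if_neg (hxne i)]
    _ = (Real.exp s - 1)⁻¹ * ((pEnt K s (y i) (x i)) * ((∏ j ∈ univ.erase i, pEnt K s (y j) (x j)) * q0 x)) := by
        have hpe : pEnt K s (y i) (x i) = 1 - Real.exp (-s) := by
          rw [pEnt, if_neg (hxne i), if_neg (by rw [hi]; exact Ne.symm (hxne i)), if_pos hi]
        rw [hpe, Real.exp_neg]
        have h0 : Real.exp s ≠ 0 := (Real.exp_pos s).ne'
        field_simp
    _ = (Real.exp s - 1)⁻¹ * ((∏ j, pEnt K s (y j) (x j)) * q0 x) := by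
        rw [← Finset.mul_prod_erase univ (fun j => pEnt K s (y j) (x j)) (Finset.mem_univ i)]
        ring

/-- Under Assumption [A2], the total outgoing rate of the ideal reverse process at
reverse time `t` is bounded by `numK(y)·K/(e^{T-t} - 1)`. The second form writes
the same sum over masked coordinates and non-mask tokens. -/
theorem reverse_outgoing_rate_bound (K d : ℕ) [NeZero K] (hK : 2 ≤ K) (hd : 1 ≤ d)
    (q0 : (Fin d → Fin K) → ℝ)
    (hq0nonneg : ∀ y, 0 ≤ q0 y) (hq0sum : ∑ y, q0 y = 1)
    (hA2 : ∀ y, 0 < q0 y ↔ numK K d y = 0)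
    (T t : ℝ) (hT : 0 < T) (ht0 : 0 ≤ t) (htT : t < T) (y : Fin d → Fin K) :
    (∑ y' ∈ Finset.univ.erase y,
        fwdRate K d y y' * qt K d q0 (T - t) y' / qt K d q0 (T - t) y
      ≤ (numK K d y : ℝ) * K / (Real.exp (T - t) - 1)) ∧
    (∑ i ∈ Finset.univ.filter (fun i : Fin d => y i = maskTok K),
        ∑ k ∈ Finset.univ.filter (fun k : Fin K => k ≠ maskTok K),
          qt K d q0 (T - t) (Function.update y i k) / qt K d q0 (T - t) y
      ≤ (numK K d y : ℝ) * K / (Real.exp (T - t) - 1)) := by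
  set s : ℝ := T - t with hsdef
  have hs : 0 < s := by rw [hsdef]; linarith
  have hes : (1:ℝ) < Real.exp s := by
    rw [← Real.exp_zero]
    exact Real.exp_strictMono hs
  have hQ : 0 < qt K d q0 s y := qt_pos q0 hq0nonneg hq0sum hA2 hs y
  have part2 : ∑ i ∈ univ.filter (fun i : Fin d => y i = maskTok K),
      ∑ k ∈ univ.filter (fun k : Fin K => k ≠ maskTok K),
        qt K d q0 s (Function.update y i k) / qt K d q0 s y
      = (numK K d y : ℝ) * (Real.exp s - 1)⁻¹ := by
    have hterm : ∀ i ∈ univ.filter (fun i : Fin d => y i = maskTok K),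
        ∑ k ∈ univ.filter (fun k : Fin K => k ≠ maskTok K),
          qt K d q0 s (Function.update y i k) / qt K d q0 s y
          = (Real.exp s - 1)⁻¹ := by
      intro i hi
      rw [← Finset.sum_div, sum_qt_update q0 hq0nonneg hA2 hs y i (Finset.mem_filter.mp hi).2,
        mul_div_assoc, div_self hQ.ne', mul_one]
    rw [Finset.sum_congr rfl hterm, Finset.sum_const, nsmul_eq_mul, numK]
  have hbound : (numK K d y : ℝ) * (Real.exp s - 1)⁻¹
      ≤ (numK K d y : ℝ) * K / (Real.exp s - 1) := by
    rw [div_eq_mul_inv]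
    have hc : (0:ℝ) ≤ (Real.exp s - 1)⁻¹ := inv_nonneg.mpr (by linarith)
    refine mul_le_mul_of_nonneg_right ?_ hc
    have h1K : (1:ℝ) ≤ (K:ℝ) := by
      have : (2:ℝ) ≤ (K:ℝ) := by exact_mod_cast hK
      linarith
    exact le_mul_of_one_le_right (Nat.cast_nonneg _) h1K
  have part1eq : ∑ y' ∈ univ.erase y,
      fwdRate K d y y' * qt K d q0 s y' / qt K d q0 s y
      = ∑ i ∈ univ.filter (fun i : Fin d => y i = maskTok K),
          ∑ k ∈ univ.filter (fun k : Fin K => k ≠ maskTok K),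
            qt K d q0 s (Function.update y i k) / qt K d q0 s y := by
    rw [← sum_offdiag y (fun y' => qt K d q0 s y' / qt K d q0 s y)]
    exact Finset.sum_congr rfl fun y' _ => (mul_div_assoc _ _ _)
  constructor
  · rw [part1eq, part2]; exact hbound
  · rw [part2]; exact hbound
end
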